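/- Determinant formula for the sp(2,ℝ) kernel matrix: let Ω : ℕ and set φ(i) := 4Ω + 2 − 4i and ψ(i) := 4Ω − 4i (as integers). Let M be the (2Ω+1)×(2Ω+1) integer matrix with block structure: for rows 0 ≤ i ≤ Ω (first block) the entries are M[i][i'] = 1 if i' = i (0 ≤ i' ≤ Ω), and in the last Ω columns (indexed by 0 ≤ t ≤ Ω−1 as column Ω+1+t) M[i][Ω+1+t] = −(i+1) if t = i, M[i][Ω+1+t] = φ(i) if t = i−1, and 0 otherwise; for rows Ω+1 ≤ Ω+1+i ≤ 2Ω (second block, 0 ≤ i ≤ Ω−1) the entries are M[Ω+1+i][i] = ψ(i), M[Ω+1+i][i+1] = −(i+1), all other entries 0 (in particular the lower-right Ω×Ω block is zero). Then det M = Ω! · Σ_{j=1}^{Ω+1} ( Π_{i=0}^{j−2} ψ(i) ) · ( Π_{i=j}^{Ω} φ(i) ). -/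

import Mathlib

/-- The `(2Ω+1) × (2Ω+1)` integer matrix encoding the linear equations
`γ_{[i,i]} + φ(i)·P_{i−1} − (i+1)·P_i = 0` (rows `0 ≤ i ≤ Ω`) and
`ψ(i)·γ_{[i,i]} − (i+1)·γ_{[i+1,i+1]} = 0` (rows `Ω+1 ≤ Ω+1+i ≤ 2Ω`) in the
unknowns `γ_{[0,0]},…,γ_{[Ω,Ω]}, P_0,…,P_{Ω−1}`, where `φ(i) = 4Ω+2−4i` and
`ψ(i) = 4Ω−4i`.  The upper-left `(Ω+1) × (Ω+1)` block is the identity, the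
lower-right `Ω × Ω` block is zero. -/
def spKernelMatrix (Ω : ℕ) : Matrix (Fin (2 * Ω + 1)) (Fin (2 * Ω + 1)) ℤ :=
  fun i i' =>
    if i.val ≤ Ω then
      if i'.val ≤ Ω then (if i'.val = i.val then 1 else 0)
      else
        if i'.val - (Ω + 1) = i.val then -((i.val : ℤ) + 1)
        else if i'.val - (Ω + 1) + 1 = i.val then 4 * (Ω : ℤ) + 2 - 4 * (i.val : ℤ)
        else 0
    else
      if i'.val = i.val - (Ω + 1) then 4 * (Ω : ℤ) - 4 * ((i.val - (Ω + 1) : ℕ) : ℤ)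
      else if i'.val = i.val - (Ω + 1) + 1 then -(((i.val - (Ω + 1) : ℕ) : ℤ) + 1)
      else 0

namespace SpAux

def tri (d e f : ℕ → ℤ) (n : ℕ) : Matrix (Fin n) (Fin n) ℤ :=
  fun i j =>
    if (i : ℕ) = j then d i
    else if (i : ℕ) + 1 = j then e i
    else if (j : ℕ) + 1 = i then f j
    else 0

lemma tri_submatrix_succ (d e f : ℕ → ℤ) (n : ℕ) :
    (tri d e f (n + 1)).submatrix Fin.succ Fin.succ
      = tri (fun k => d (k + 1)) (fun k => e (k + 1)) (fun k => f (k + 1)) n := by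
  ext i j
  simp only [tri, Matrix.submatrix_apply, Fin.val_succ]
  split_ifs <;> first | rfl | (exfalso; omega)

lemma det_tri_succ_succ (d e f : ℕ → ℤ) (n : ℕ) :
    (tri d e f (n + 2)).det
      = d 0 * (tri (fun k => d (k + 1)) (fun k => e (k + 1)) (fun k => f (k + 1)) (n + 1)).det
        - e 0 * f 0 * (tri (fun k => d (k + 2)) (fun k => e (k + 2)) (fun k => f (k + 2)) n).det := by
  rw [Matrix.det_succ_row_zero, Fin.sum_univ_succ, Fin.sum_univ_succ]
  have hzero : ∀ j : Fin n, tri d e f (n + 2) 0 (j.succ.succ) = 0 := by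
    intro j
    simp only [tri, Fin.val_succ, Fin.val_zero]
    split_ifs <;> first | rfl | (exfalso; omega) | simp_all
  have h00 : tri d e f (n + 2) 0 0 = d 0 := by simp [tri]
  have h01 : tri d e f (n + 2) 0 (Fin.succ 0) = e 0 := by
    simp only [tri, Fin.val_succ, Fin.val_zero]
    norm_num
  rw [h00, h01]
  simp only [hzero, zero_mul, mul_zero, Finset.sum_const_zero, add_zero]
  have hA : (tri d e f (n + 2)).submatrix Fin.succ ((0 : Fin (n + 2)).succAbove)
      = tri (fun k => d (k + 1)) (fun k => e (k + 1)) (fun k => f (k + 1)) (n + 1) := by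
    rw [Fin.succAbove_zero, tri_submatrix_succ]
  -- second cofactor
  set N := (tri d e f (n + 2)).submatrix Fin.succ ((Fin.succ (0 : Fin (n + 1))).succAbove) with hN
  have hNcol : ∀ i : Fin (n + 1), N i 0 = if (i : ℕ) = 0 then f 0 else 0 := by
    intro i
    rw [hN]
    simp only [Matrix.submatrix_apply, Fin.succ_succAbove_zero]
    simp only [tri, Fin.val_succ, Fin.val_zero]
    split_ifs <;> first | rfl | (exfalso; omega) | simp_all
  have hNsub : N.submatrix Fin.succ Fin.succ
      = tri (fun k => d (k + 2)) (fun k => e (k + 2)) (fun k => f (k + 2)) n := by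
    rw [hN]
    ext i j
    simp only [Matrix.submatrix_apply, Fin.succ_succAbove_succ, Fin.succAbove_zero]
    simp only [tri, Fin.val_succ]
    split_ifs <;> first | rfl | (exfalso; omega)
  have hdetN : N.det = f 0 *
      (tri (fun k => d (k + 2)) (fun k => e (k + 2)) (fun k => f (k + 2)) n).det := by
    rw [Matrix.det_succ_column_zero, Fin.sum_univ_succ]
    simp only [hNcol, Fin.val_succ, Fin.val_zero, if_pos rfl]
    norm_num
    exact Or.inl (by rw [hNsub])
  rw [hA, hdetN]
  simp only [Fin.val_zero, Fin.val_succ, pow_zero, pow_one, one_mul]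
  push_cast
  ring
end SpAux

namespace SpAux

def g (ψ φ : ℕ → ℤ) : ℕ → ℕ → ℤ
  | _, 0 => 1
  | s, (n + 1) => (∏ i ∈ Finset.range (n + 1), φ (s + 1 + i)) + ψ s * g ψ φ (s + 1) n

lemma prod_shift (φ : ℕ → ℤ) (t n : ℕ) :
    (∏ i ∈ Finset.range (n + 1), φ (t + i)) = φ t * ∏ i ∈ Finset.range n, φ (t + 1 + i) := by
  rw [Finset.prod_range_succ']
  rw [mul_comm]
  congr 1
  · exact Finset.prod_congr rfl (fun i _ => by rw [show t + (i + 1) = t + 1 + i by omega])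

lemma g_two_step (ψ φ : ℕ → ℤ) (s n : ℕ) :
    g ψ φ s (n + 2)
      = (ψ s + φ (s + 1)) * g ψ φ (s + 1) (n + 1)
        - ψ (s + 1) * φ (s + 1) * g ψ φ (s + 2) n := by
  show (∏ i ∈ Finset.range (n + 2), φ (s + 1 + i)) + ψ s * g ψ φ (s + 1) (n + 1) = _
  rw [prod_shift φ (s + 1) (n + 1)]
  have h1 : g ψ φ (s + 1) (n + 1)
      = (∏ i ∈ Finset.range (n + 1), φ (s + 1 + 1 + i)) + ψ (s + 1) * g ψ φ (s + 2) n := rfl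
  rw [h1]
  ring

lemma g_eq_sum (ψ φ : ℕ → ℤ) : ∀ n s, g ψ φ s n
    = ∑ t ∈ Finset.range (n + 1),
        (∏ i ∈ Finset.range t, ψ (s + i)) * (∏ i ∈ Finset.range (n - t), φ (s + t + 1 + i)) := by
  intro n
  induction n with
  | zero => intro s; simp [g]
  | succ n ih =>
    intro s
    rw [Finset.sum_range_succ']
    have hA0 : (∏ i ∈ Finset.range 0, ψ (s + i)) *
        (∏ i ∈ Finset.range (n + 1 - 0), φ (s + 0 + 1 + i))
        = ∏ i ∈ Finset.range (n + 1), φ (s + 1 + i) := by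
      simp
    rw [hA0]
    have hstep : ∀ t, (∏ i ∈ Finset.range (t + 1), ψ (s + i)) *
        (∏ i ∈ Finset.range (n + 1 - (t + 1)), φ (s + (t + 1) + 1 + i))
        = ψ s * ((∏ i ∈ Finset.range t, ψ (s + 1 + i)) *
            (∏ i ∈ Finset.range (n - t), φ (s + 1 + t + 1 + i))) := by
      intro t
      have h2 : (∏ i ∈ Finset.range (n + 1 - (t + 1)), φ (s + (t + 1) + 1 + i))
          = ∏ i ∈ Finset.range (n - t), φ (s + 1 + t + 1 + i) := by
        rw [show n + 1 - (t + 1) = n - t by omega]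
        exact Finset.prod_congr rfl
          (fun i _ => by rw [show s + (t + 1) + 1 + i = s + 1 + t + 1 + i by omega])
      rw [prod_shift ψ s t, h2]
      ring
    rw [Finset.sum_congr rfl (fun t _ => hstep t), ← Finset.mul_sum]
    rw [show g ψ φ s (n + 1)
        = (∏ i ∈ Finset.range (n + 1), φ (s + 1 + i)) + ψ s * g ψ φ (s + 1) n from rfl]
    rw [ih (s + 1)]
    ring

end SpAux

namespace SpAux

lemma det_tri_eq (ψ φ : ℕ → ℤ) : ∀ n s,
    (tri (fun k => (((s + k : ℕ) : ℤ) + 1) * (ψ (s + k) + φ (s + k + 1)))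
         (fun k => -((((s + k : ℕ) : ℤ) + 1) * (((s + k : ℕ) : ℤ) + 2)))
         (fun k => -(ψ (s + k + 1) * φ (s + k + 1))) n).det
      = (∏ k ∈ Finset.range n, (((s + k : ℕ) : ℤ) + 1)) * g ψ φ s n := by
  intro n
  induction n using Nat.strong_induction_on with
  | _ n ih =>
    rcases n with _ | _ | m
    · intro s
      simp [Matrix.det_fin_zero, g]
    · intro s
      rw [Matrix.det_fin_one]
      have hg : g ψ φ s 1 = φ (s + 1) + ψ s := by
        show (∏ i ∈ Finset.range 1, φ (s + 1 + i)) + ψ s * g ψ φ (s + 1) 0 = _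
        show (∏ i ∈ Finset.range 1, φ (s + 1 + i)) + ψ s * 1 = _
        simp
      rw [hg]
      show (((s + (0:ℕ) : ℕ) : ℤ) + 1) * (ψ (s + 0) + φ (s + 0 + 1)) = _
      rw [Finset.prod_range_one]
      simp only [Nat.add_zero]
      ring
    · intro s
      rw [det_tri_succ_succ]
      have hd1 : (fun k => (((s + (k + 1) : ℕ) : ℤ) + 1) * (ψ (s + (k + 1)) + φ (s + (k + 1) + 1)))
          = (fun k => (((s + 1 + k : ℕ) : ℤ) + 1) * (ψ (s + 1 + k) + φ (s + 1 + k + 1))) := by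
        funext k; rw [show s + (k + 1) = s + 1 + k by omega]
      have he1 : (fun k => -((((s + (k + 1) : ℕ) : ℤ) + 1) * (((s + (k + 1) : ℕ) : ℤ) + 2)))
          = (fun k => -((((s + 1 + k : ℕ) : ℤ) + 1) * (((s + 1 + k : ℕ) : ℤ) + 2))) := by
        funext k; rw [show s + (k + 1) = s + 1 + k by omega]
      have hf1 : (fun k => -(ψ (s + (k + 1) + 1) * φ (s + (k + 1) + 1)))
          = (fun k => -(ψ (s + 1 + k + 1) * φ (s + 1 + k + 1))) := by
        funext k; rw [show s + (k + 1) = s + 1 + k by omega]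
      have hd2 : (fun k => (((s + (k + 2) : ℕ) : ℤ) + 1) * (ψ (s + (k + 2)) + φ (s + (k + 2) + 1)))
          = (fun k => (((s + 2 + k : ℕ) : ℤ) + 1) * (ψ (s + 2 + k) + φ (s + 2 + k + 1))) := by
        funext k; rw [show s + (k + 2) = s + 2 + k by omega]
      have he2 : (fun k => -((((s + (k + 2) : ℕ) : ℤ) + 1) * (((s + (k + 2) : ℕ) : ℤ) + 2)))
          = (fun k => -((((s + 2 + k : ℕ) : ℤ) + 1) * (((s + 2 + k : ℕ) : ℤ) + 2))) := by
        funext k; rw [show s + (k + 2) = s + 2 + k by omega]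
      have hf2 : (fun k => -(ψ (s + (k + 2) + 1) * φ (s + (k + 2) + 1)))
          = (fun k => -(ψ (s + 2 + k + 1) * φ (s + 2 + k + 1))) := by
        funext k; rw [show s + (k + 2) = s + 2 + k by omega]
      rw [hd1, he1, hf1, hd2, he2, hf2]
      rw [ih (m + 1) (by omega) (s + 1), ih m (by omega) (s + 2)]
      rw [g_two_step]
      have hp1 : (∏ k ∈ Finset.range (m + 2), (((s + k : ℕ) : ℤ) + 1))
          = (((s : ℕ) : ℤ) + 1) * ∏ k ∈ Finset.range (m + 1), (((s + 1 + k : ℕ) : ℤ) + 1) := by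
        have := prod_shift (fun k => ((k : ℤ) + 1)) s (m + 1)
        simpa using this
      have hp2 : (∏ k ∈ Finset.range (m + 1), (((s + 1 + k : ℕ) : ℤ) + 1))
          = (((s : ℕ) : ℤ) + 2) * ∏ k ∈ Finset.range m, (((s + 2 + k : ℕ) : ℤ) + 1) := by
        have := prod_shift (fun k => ((k : ℤ) + 1)) (s + 1) m
        have h2 : ∀ k, s + 1 + 1 + k = s + 2 + k := by intro k; omega
        simp only [h2] at this
        rw [this]
        push_cast
        ring
      rw [hp1, hp2]
      simp only [Nat.add_zero]
      push_cast
      ring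

end SpAux

namespace SpAux

def Bm (Ω : ℕ) : Matrix (Fin (Ω + 1)) (Fin Ω) ℤ := fun i t =>
  if (t : ℕ) = (i : ℕ) then -(((i : ℕ) : ℤ) + 1)
  else if (t : ℕ) + 1 = (i : ℕ) then 4 * (Ω : ℤ) + 2 - 4 * ((i : ℕ) : ℤ)
  else 0

def Cm (Ω : ℕ) : Matrix (Fin Ω) (Fin (Ω + 1)) ℤ := fun k j =>
  if (j : ℕ) = (k : ℕ) then 4 * (Ω : ℤ) - 4 * ((k : ℕ) : ℤ)
  else if (j : ℕ) = (k : ℕ) + 1 then -(((k : ℕ) : ℤ) + 1)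
  else 0

def blockEquiv (Ω : ℕ) : Fin (Ω + 1) ⊕ Fin Ω ≃ Fin (2 * Ω + 1) :=
  finSumFinEquiv.trans (finCongr (by omega))

lemma submatrix_eq (Ω : ℕ) :
    (spKernelMatrix Ω).submatrix (blockEquiv Ω) (blockEquiv Ω)
      = Matrix.fromBlocks 1 (Bm Ω) (Cm Ω) 0 := by
  ext i j
  have hval : ∀ x : Fin (Ω + 1) ⊕ Fin Ω, ((blockEquiv Ω x : Fin (2 * Ω + 1)) : ℕ)
      = Sum.elim (fun a : Fin (Ω + 1) => (a : ℕ)) (fun b : Fin Ω => Ω + 1 + (b : ℕ)) x := by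
    intro x
    cases x with
    | inl a => simp [blockEquiv, finSumFinEquiv]
    | inr b => simp [blockEquiv, finSumFinEquiv]
  cases i with
  | inl a =>
    cases j with
    | inl c =>
      have ha := a.isLt
      have hc := c.isLt
      simp only [Matrix.submatrix_apply, spKernelMatrix, hval, Sum.elim_inl,
        Matrix.fromBlocks_apply₁₁, Matrix.one_apply, Fin.ext_iff]
      rw [if_pos (by omega : (a : ℕ) ≤ Ω), if_pos (by omega : (c : ℕ) ≤ Ω)]
      by_cases h : (c : ℕ) = (a : ℕ)
      · rw [if_pos h, if_pos (by omega : (a : ℕ) = (c : ℕ))]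
      · rw [if_neg h, if_neg (by omega : ¬ (a : ℕ) = (c : ℕ))]
    | inr d =>
      have ha := a.isLt
      have hd := d.isLt
      simp only [Matrix.submatrix_apply, spKernelMatrix, hval, Sum.elim_inl, Sum.elim_inr,
        Matrix.fromBlocks_apply₁₂, Bm]
      rw [if_pos (by omega : (a : ℕ) ≤ Ω), if_neg (by omega : ¬ Ω + 1 + (d : ℕ) ≤ Ω)]
      rw [show Ω + 1 + (d : ℕ) - (Ω + 1) = (d : ℕ) by omega]
  | inr b =>
    cases j with
    | inl c =>
      have hb := b.isLt
      have hc := c.isLt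
      simp only [Matrix.submatrix_apply, spKernelMatrix, hval, Sum.elim_inl, Sum.elim_inr,
        Matrix.fromBlocks_apply₂₁, Cm]
      rw [if_neg (by omega : ¬ Ω + 1 + (b : ℕ) ≤ Ω)]
      rw [show Ω + 1 + (b : ℕ) - (Ω + 1) = (b : ℕ) by omega]
    | inr d =>
      have hb := b.isLt
      have hd := d.isLt
      simp only [Matrix.submatrix_apply, spKernelMatrix, hval, Sum.elim_inr,
        Matrix.fromBlocks_apply₂₂, Matrix.zero_apply]
      rw [if_neg (by omega : ¬ Ω + 1 + (b : ℕ) ≤ Ω)]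
      rw [show Ω + 1 + (b : ℕ) - (Ω + 1) = (b : ℕ) by omega]
      rw [if_neg (by omega : ¬ Ω + 1 + (d : ℕ) = (b : ℕ)),
        if_neg (by omega : ¬ Ω + 1 + (d : ℕ) = (b : ℕ) + 1)]

end SpAux

namespace SpAux

lemma sum_pair {n : ℕ} (a b : Fin n) (hab : a ≠ b) (X Y : ℤ) (B : Fin n → ℤ) :
    (∑ j, (if j = a then X else if j = b then Y else 0) * B j) = X * B a + Y * B b := by
  have hpt : ∀ j, (if j = a then X else if j = b then Y else 0) * B j
      = (if j = a then X * B j else 0) + (if j = b then Y * B j else 0) := by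
    intro j
    by_cases h1 : j = a
    · subst h1
      rw [if_pos rfl, if_pos rfl, if_neg hab]
      ring
    · rw [if_neg h1, if_neg h1]
      by_cases h2 : j = b
      · subst h2; rw [if_pos rfl, if_pos rfl]; ring
      · rw [if_neg h2, if_neg h2]; ring
  rw [Finset.sum_congr rfl (fun j _ => hpt j), Finset.sum_add_distrib,
    Finset.sum_ite_eq' Finset.univ a (fun j => X * B j),
    Finset.sum_ite_eq' Finset.univ b (fun j => Y * B j)]
  simp

lemma zero_sub_CB (Ω : ℕ) :
    (0 : Matrix (Fin Ω) (Fin Ω) ℤ) - Cm Ω * Bm Ω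
      = tri (fun k => (((0 + k : ℕ) : ℤ) + 1) *
              ((fun i : ℕ => 4 * (Ω : ℤ) - 4 * (i : ℤ)) (0 + k)
                + (fun i : ℕ => 4 * (Ω : ℤ) + 2 - 4 * (i : ℤ)) (0 + k + 1)))
            (fun k => -((((0 + k : ℕ) : ℤ) + 1) * (((0 + k : ℕ) : ℤ) + 2)))
            (fun k => -((fun i : ℕ => 4 * (Ω : ℤ) - 4 * (i : ℤ)) (0 + k + 1)
                * (fun i : ℕ => 4 * (Ω : ℤ) + 2 - 4 * (i : ℤ)) (0 + k + 1))) Ω := by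
  ext k t
  have hCm : ∀ j : Fin (Ω + 1), Cm Ω k j
      = if j = Fin.castSucc k then 4 * (Ω : ℤ) - 4 * ((k : ℕ) : ℤ)
        else if j = Fin.succ k then -(((k : ℕ) : ℤ) + 1) else 0 := by
    intro j
    simp only [Cm, Fin.ext_iff, Fin.coe_castSucc, Fin.val_succ]
  have hne : Fin.castSucc k ≠ Fin.succ k := by
    simp [Fin.ext_iff]
  rw [Matrix.sub_apply, Matrix.zero_apply, Matrix.mul_apply]
  rw [Finset.sum_congr rfl (fun j _ => by rw [hCm j])]
  rw [sum_pair _ _ hne]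
  simp only [Bm, Fin.coe_castSucc, Fin.val_succ, tri]
  split_ifs
  all_goals try (exfalso; omega)
  all_goals push_cast
  all_goals try ring
  all_goals
    (try rw [show ((t : ℕ) : ℤ) = ((k : ℕ) : ℤ) from by omega]);
    (try rw [show ((k : ℕ) : ℤ) = ((t : ℕ) : ℤ) + 1 from by omega]);
    (try rw [show ((t : ℕ) : ℤ) = ((k : ℕ) : ℤ) + 1 from by omega]);
    ring

end SpAux

/-- **Determinant formula for the `sp(2,ℝ)` kernel matrix.**
With `φ(i) = 4Ω+2−4i` and `ψ(i) = 4Ω−4i`,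
`det M = Ω! · ∑_{j=1}^{Ω+1} (∏_{i=0}^{j−2} ψ(i)) · (∏_{i=j}^{Ω} φ(i))`. -/
theorem det_spKernelMatrix (Ω : ℕ) :
    (spKernelMatrix Ω).det
      = (Nat.factorial Ω : ℤ) *
          ∑ j ∈ Finset.Icc 1 (Ω + 1),
            (∏ i ∈ Finset.range (j - 1), (4 * (Ω : ℤ) - 4 * (i : ℤ))) *
            (∏ i ∈ Finset.Icc j Ω, (4 * (Ω : ℤ) + 2 - 4 * (i : ℤ))) := by
  classical
  set ψ : ℕ → ℤ := fun i : ℕ => 4 * (Ω : ℤ) - 4 * (i : ℤ) with hψ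
  set φ : ℕ → ℤ := fun i : ℕ => 4 * (Ω : ℤ) + 2 - 4 * (i : ℤ) with hφ
  have h1 : (spKernelMatrix Ω).det = (Matrix.fromBlocks 1 (SpAux.Bm Ω) (SpAux.Cm Ω) 0).det := by
    rw [← SpAux.submatrix_eq Ω, Matrix.det_submatrix_equiv_self]
  rw [h1, Matrix.det_fromBlocks_one₁₁, SpAux.zero_sub_CB,
    SpAux.det_tri_eq (fun i : ℕ => 4 * (Ω : ℤ) - 4 * (i : ℤ))
      (fun i : ℕ => 4 * (Ω : ℤ) + 2 - 4 * (i : ℤ)) Ω 0]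
  congr 1
  · -- factorial
    rw [← Finset.prod_range_add_one_eq_factorial]
    push_cast
    exact Finset.prod_congr rfl (fun k _ => by norm_num)
  · -- sums
    rw [SpAux.g_eq_sum]
    rw [← Finset.Ico_add_one_right_eq_Icc, Finset.sum_Ico_eq_sum_range]
    refine Finset.sum_congr (by norm_num) (fun t ht => ?_)
    congr 1
    · exact Finset.prod_congr (by norm_num) (fun i _ => by norm_num [hψ])
    · rw [← Finset.Ico_add_one_right_eq_Icc, Finset.prod_Ico_eq_prod_range]
      refine Finset.prod_congr (by congr 1; omega) (fun i _ => ?_)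
      rw [show (0:ℕ) + t + 1 + i = 1 + t + i by omega]
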